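/- Let n ≥ 3 and let S = T, n−1, n−1 be a Hamilton sequence for the rotator graph PR_{n−1} whose last two entries equal n−1, with each prefix-rotation σ_r (r ≤ n−1) regarded as a permutation of {1,…,n} that fixes position n. Let a be a permutation of {1,…,n} (as a string) whose last symbol is x. Then: (1) nodes(a; T, n−1) equals the set of all permutations of {1,…,n} whose last symbol is x; and (2) nodes(a; T) equals that set with the single string a·σ_{n−1}^{−1} removed. -/

import Mathlib

open Equiv

/-- The prefix-rotation `σ_r = (1 2 ⋯ r)` of positions, 0-indexed as a
permutation of `Fin n` (it sends position `i` to `i+1` for `i < r-1`,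
sends position `r-1` to `0`, and fixes all positions `≥ r`). -/
def sigmaRot (n r : ℕ) : Equiv.Perm (Fin n) :=
  if h : r - 1 < n then Fin.cycleRange ⟨r - 1, h⟩ else 1

/-- The permutation `σ_{r₁}σ_{r₂}⋯σ_{r_i}` (composed left-to-right) given by the
first `i` entries of the sequence `S`. -/
def partialProd (n : ℕ) (S : List ℕ) (i : ℕ) : Equiv.Perm (Fin n) :=
  ((S.take i).map (sigmaRot n)).prod

/-- `S` is a Hamilton sequence for the restricted rotator graph `RR_n(R)`. -/
def IsHamiltonSeq (n : ℕ) (R : Set ℕ) (S : List ℕ) : Prop :=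
  S.length = Nat.factorial n ∧
  (∀ r ∈ S, r ∈ R) ∧
  (∀ i < Nat.factorial n, ∀ j < Nat.factorial n,
      partialProd n S i = partialProd n S j → i = j) ∧
  partialProd n S S.length = 1

/-- The value (0-indexed symbol) at the last position of the string `a`;
the one-line-notation symbol there is `lastVal a + 1`. -/
def lastVal {n : ℕ} (a : Equiv.Perm (Fin n)) : ℕ :=
  if h : 0 < n then ((a ⟨n - 1, Nat.sub_lt h Nat.one_pos⟩ : Fin n) : ℕ) else 0

/-- Arc relation of the restricted incomplete rotator graph `RIR_n(R,m)`:
both endpoints have last symbol `≤ m` and `b = a·σ_r` for some `r ∈ R`. -/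
def RIRAdj (n m : ℕ) (R : Set ℕ) (a b : Equiv.Perm (Fin n)) : Prop :=
  lastVal a < m ∧ lastVal b < m ∧ ∃ r ∈ R, b = a * sigmaRot n r

/-- `RIR_n(R,m)` is strongly connected. -/
def StronglyConnectedRIR (n m : ℕ) (R : Set ℕ) : Prop :=
  ∀ a b : Equiv.Perm (Fin n), lastVal a < m → lastVal b < m →
    Relation.ReflTransGen (RIRAdj n m R) a b

/-- The reuse operation: replace each entry `r` by `n,…,n,n+1-r` (`n-1` copies of `n`). -/
def reuseOp (n : ℕ) (S : List ℕ) : List ℕ :=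
  (S.map (fun r => List.replicate (n - 1) n ++ [n + 1 - r])).flatten

/-- Corbett's reuse sequences: `C₁ = (1)` and `C_k = reuse_k(C_{k-1})`. -/
def corbettC : ℕ → List ℕ
  | 0 => []
  | 1 => [1]
  | k + 2 => reuseOp (k + 2) (corbettC (k + 1))

/-- The recycle operation: replace each entry `r` by
`n, n, n-1, …, n-1, n, …, n` (`r-1` copies of `n-1`, then `n-r-1` copies of `n`). -/
def recycleOp (n : ℕ) (S : List ℕ) : List ℕ :=
  (S.map (fun r => n :: n :: (List.replicate (r - 1) (n - 1) ++ List.replicate (n - r - 1) n))).flatten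

/-- The canonical recycle sequences: `D₁ = (1)` and `D_k = recycle_k(D_{k-1})`. -/
def recycleD : ℕ → List ℕ
  | 0 => []
  | 1 => [1]
  | k + 2 => recycleOp (k + 2) (recycleD (k + 1))

/-- The rewind operation `rewind_m(S)` (with `S = T, n-1, n-1`):
`(T,n-1,n)`, then `m-2` copies of `(T,n)`, then `(T,n-1,n)`, then `m-2` copies of `n`. -/
def rewindOp (n m : ℕ) (S : List ℕ) : List ℕ :=
  (S.dropLast.dropLast ++ [n - 1, n])
    ++ (List.replicate (m - 2) (S.dropLast.dropLast ++ [n])).flatten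
    ++ (S.dropLast.dropLast ++ [n - 1, n])
    ++ List.replicate (m - 2) n

/-- The canonical rewind sequences: `W₂ = (2,2)` and `W_k = rewind_k(W_{k-1})`. -/
def rewindW : ℕ → List ℕ
  | 0 => []
  | 1 => []
  | 2 => [2, 2]
  | k + 3 => rewindOp (k + 3) (k + 3) (rewindW (k + 2))

/-- `S` is a Hamilton sequence for the restricted incomplete rotator graph `RIR_n(R,m)`,
starting from the string `n n-1 ⋯ 1` (which is `Fin.revPerm`). -/
def IsHamiltonSeqRIR (n m : ℕ) (R : Set ℕ) (S : List ℕ) : Prop :=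
  S.length = m * Nat.factorial (n - 1) ∧
  (∀ r ∈ S, r ∈ R) ∧
  (∀ i < S.length, ∀ j < S.length,
      Fin.revPerm * partialProd n S i = Fin.revPerm * partialProd n S j → i = j) ∧
  {b : Equiv.Perm (Fin n) | ∃ i < S.length, b = Fin.revPerm * partialProd n S i}
    = {b : Equiv.Perm (Fin n) | lastVal b < m} ∧
  Fin.revPerm * partialProd n S S.length = Fin.revPerm

/-- The cyclic shift `shift²` moving the first two entries to the end. -/
def shift2 (S : List ℕ) : List ℕ := S.drop 2 ++ S.take 2

/-- `nodes(a;S)`: the `|S|+1` strings visited when applying the rotations of `S`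
successively to the string `a` (here with rotations acting as permutations of `Fin n`). -/
def nodesSet (n : ℕ) (a : Equiv.Perm (Fin n)) (S : List ℕ) : Set (Equiv.Perm (Fin n)) :=
  {b | ∃ i ≤ S.length, b = a * partialProd n S i}

section Aux

open Equiv.Perm

/-- The castSucc embedding `Fin m ↪ Fin (m+1)`. -/
def csEmb (m : ℕ) : Fin m ↪ Fin (m + 1) := ⟨Fin.castSucc, Fin.castSucc_injective m⟩

lemma last_not_mem_range_csEmb (m : ℕ) : Fin.last m ∉ Set.range (csEmb m) := by
  rintro ⟨x, hx⟩
  have := congrArg Fin.val hx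
  simp [csEmb] at this
  omega

lemma cycCompat (k t : ℕ) (ht : t < k + 2) :
    Equiv.Perm.viaEmbedding (Fin.cycleRange ⟨t, ht⟩) (csEmb (k + 2))
      = Fin.cycleRange (⟨t, by omega⟩ : Fin (k + 3)) := by
  ext j
  by_cases hj : (j : ℕ) < k + 2
  · have hjj : (csEmb (k + 2)) ⟨(j : ℕ), hj⟩ = j := Fin.ext rfl
    rw [← hjj, Equiv.Perm.viaEmbedding_apply]
    rcases lt_trichotomy ((j : ℕ)) t with h | h | h
    · rw [show ((csEmb (k+2)) (Fin.cycleRange ⟨t, ht⟩ ⟨(j:ℕ), hj⟩) : ℕ)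
          = ((Fin.cycleRange ⟨t, ht⟩ ⟨(j:ℕ), hj⟩ : Fin (k+2)) : ℕ) from rfl]
      rw [Fin.coe_cycleRange_of_lt (by simpa [Fin.lt_def] using h),
        Fin.coe_cycleRange_of_lt (by simpa [csEmb, Fin.lt_def] using h)]
      rfl
    · rw [show ((csEmb (k+2)) (Fin.cycleRange ⟨t, ht⟩ ⟨(j:ℕ), hj⟩) : ℕ)
          = ((Fin.cycleRange ⟨t, ht⟩ ⟨(j:ℕ), hj⟩ : Fin (k+2)) : ℕ) from rfl]
      rw [Fin.cycleRange_of_eq (by simp [Fin.ext_iff, h]),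
        Fin.cycleRange_of_eq (by simp [csEmb, Fin.ext_iff, h])]
      rfl
    · rw [show ((csEmb (k+2)) (Fin.cycleRange ⟨t, ht⟩ ⟨(j:ℕ), hj⟩) : ℕ)
          = ((Fin.cycleRange ⟨t, ht⟩ ⟨(j:ℕ), hj⟩ : Fin (k+2)) : ℕ) from rfl]
      rw [Fin.cycleRange_of_gt (by simpa [Fin.lt_def] using h),
        Fin.cycleRange_of_gt (by simpa [csEmb, Fin.lt_def] using h)]
      rfl
  · rw [Equiv.Perm.viaEmbedding_apply_of_notMem]
    · rw [Fin.cycleRange_of_gt (by simp [Fin.lt_def]; omega)]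
    · rintro ⟨x, hx⟩
      have := congrArg Fin.val hx
      simp [csEmb] at this
      omega

lemma sigmaCompat (k r : ℕ) (h1 : 1 ≤ r) (hr : r ≤ k + 2) :
    Equiv.Perm.viaEmbeddingHom (csEmb (k + 2)) (sigmaRot (k + 2) r) = sigmaRot (k + 3) r := by
  have ht : r - 1 < k + 2 := by omega
  have ht' : r - 1 < k + 3 := by omega
  rw [Equiv.Perm.viaEmbeddingHom_apply]
  unfold sigmaRot
  rw [dif_pos ht, dif_pos ht']
  exact cycCompat k (r - 1) ht

lemma card_stab (N : ℕ) :
    Fintype.card {g : Equiv.Perm (Fin (N + 1)) // g (Fin.last N) = Fin.last N}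
      = Nat.factorial N := by
  have h1 : Fintype.card {g : Equiv.Perm (Fin (N + 1)) // g (Fin.last N) = Fin.last N}
      = Fintype.card (Equiv.Perm {j : Fin (N + 1) // j ≠ Fin.last N}) := by
    apply le_antisymm
    · apply Fintype.card_le_of_injective
        (fun (g : {g : Equiv.Perm (Fin (N + 1)) // g (Fin.last N) = Fin.last N}) =>
          Equiv.Perm.subtypePerm g.1 (fun x => not_iff_not.mpr
          ⟨fun hx => g.1.injective (by rw [hx, g.2]),
           fun hx => by rw [hx]; exact g.2.symm ▸ g.2⟩))
      intro g g' h
      apply Subtype.ext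
      ext j
      by_cases hj : j = Fin.last N
      · rw [hj, g.2, g'.2]
      · have h2 := congrArg (fun σ : Equiv.Perm {j : Fin (N+1) // j ≠ Fin.last N} =>
          (σ ⟨j, hj⟩).1) h
        simp only [Equiv.Perm.subtypePerm_apply] at h2
        exact congrArg Fin.val h2
    · apply Fintype.card_le_of_injective
        (fun σ => ⟨σ.extendDomain (Equiv.refl _),
          Equiv.Perm.extendDomain_apply_not_subtype _ _ (by simp)⟩)
      intro σ σ' h
      have h' := congrArg Subtype.val h
      ext x
      have h1 := congrArg (fun τ : Equiv.Perm (Fin (N+1)) => τ ((Equiv.refl _) x).1) h'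
      simp only [Equiv.Perm.extendDomain_apply_image] at h1
      simp only [Equiv.refl_apply] at h1
      exact congrArg Fin.val h1
  rw [h1, Fintype.card_perm, Fintype.card_congr (finSuccAboveEquiv (Fin.last N)).symm,
    Fintype.card_fin]

end Aux

/-- Let `n ≥ 3` and let `S = T,n-1,n-1` be a Hamilton sequence for
`PR_{n-1}`, with each `σ_r` (`r ≤ n-1`) regarded as a permutation of `{1,…,n}` fixing the
last position. For a string `a` with last symbol `x`: (1) `nodes(a; T,n-1)` is the set of all
strings with last symbol `x`; (2) `nodes(a; T)` is that set minus `{a·σ_{n-1}⁻¹}`. -/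
theorem stmt11 (n : ℕ) (hn : 3 ≤ n) (T : List ℕ)
    (hS : IsHamiltonSeq (n - 1) {r | 2 ≤ r ∧ r ≤ n - 1} (T ++ [n - 1, n - 1]))
    (a : Equiv.Perm (Fin n)) :
    nodesSet n a (T ++ [n - 1]) = {b : Equiv.Perm (Fin n) | lastVal b = lastVal a} ∧
    nodesSet n a T
      = {b : Equiv.Perm (Fin n) | lastVal b = lastVal a} \ {a * (sigmaRot n (n - 1))⁻¹} := by
  obtain ⟨k, rfl⟩ : ∃ k, n = k + 3 := ⟨n - 3, by omega⟩
  have h31 : k + 3 - 1 = k + 2 := by omega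
  rw [h31] at hS ⊢
  obtain ⟨hlen, hmem, hdist, hprodfull⟩ := hS
  set S : List ℕ := T ++ [k + 2, k + 2] with hSdef
  set L := T.length with hL
  have hlenS : S.length = L + 2 := by simp [hSdef, hL]
  have hLfact : L + 2 = Nat.factorial (k + 2) := by rw [← hlenS, hlen]
  have hC : ∀ i, Equiv.Perm.viaEmbeddingHom (csEmb (k + 2)) (partialProd (k + 2) S i)
      = partialProd (k + 3) S i := by
    intro i
    unfold partialProd
    rw [map_list_prod, List.map_map]
    congr 1
    apply List.map_congr_left
    intro r hr
    have hr' := hmem _ (List.mem_of_mem_take hr)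
    exact sigmaCompat k r (by exact_mod_cast Nat.le_of_lt (by have := hr'.1; omega)) hr'.2
  have hfixP : ∀ i, (partialProd (k + 3) S i) (Fin.last (k + 2)) = Fin.last (k + 2) := by
    intro i
    rw [← hC, Equiv.Perm.viaEmbeddingHom_apply]
    exact Equiv.Perm.viaEmbedding_apply_of_notMem _ _ _ (last_not_mem_range_csEmb _)
  have hlv : ∀ b : Equiv.Perm (Fin (k + 3)), lastVal b = ((b (Fin.last (k + 2))) : ℕ) := by
    intro b
    unfold lastVal
    rw [dif_pos (by omega : 0 < k + 3)]
    have harg : (⟨k + 3 - 1, Nat.sub_lt (by omega) Nat.one_pos⟩ : Fin (k + 3))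
        = Fin.last (k + 2) := by
      apply Fin.ext
      simp [Fin.last]
    rw [harg]
  have hD : ∀ i < L + 2, ∀ j < L + 2,
      partialProd (k + 3) S i = partialProd (k + 3) S j → i = j := by
    intro i hi j hj h
    apply hdist i (by omega) j (by omega)
    apply Equiv.Perm.viaEmbeddingHom_injective (csEmb (k + 2))
    rw [hC, hC]
    exact h
  have hfull : partialProd (k + 3) S (L + 2) = 1 := by
    have h0 := hprodfull
    rw [hlenS] at h0
    rw [← hC, h0, map_one]
  have hSsplit : S = (T ++ [k + 2]) ++ [k + 2] := by simp [hSdef]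
  have hlen1 : (T ++ [k + 2]).length = L + 1 := by simp [hL]
  have htk1 : S.take (L + 2) = S := List.take_of_length_le (by omega)
  have htk2 : S.take (L + 1) = T ++ [k + 2] := by
    rw [hSsplit, List.take_append_of_le_length (by rw [hlen1])]
    exact List.take_of_length_le (by rw [hlen1])
  have hstep : partialProd (k + 3) S (L + 2)
      = partialProd (k + 3) S (L + 1) * sigmaRot (k + 3) (k + 2) := by
    unfold partialProd
    rw [htk1, htk2, hSsplit, List.map_append, List.prod_append]
    simp
  have hσinv : partialProd (k + 3) S (L + 1) = (sigmaRot (k + 3) (k + 2))⁻¹ := by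
    apply mul_eq_one_iff_eq_inv.mp
    rw [← hstep]
    exact hfull
  have htake1 : ∀ i ≤ L + 1, partialProd (k + 3) (T ++ [k + 2]) i = partialProd (k + 3) S i := by
    intro i hi
    unfold partialProd
    have hq : S.take i = (T ++ [k + 2]).take i := by
      rw [hSsplit]
      exact List.take_append_of_le_length (by rw [hlen1]; omega)
    rw [hq]
  have htake0 : ∀ i ≤ L, partialProd (k + 3) T i = partialProd (k + 3) S i := by
    intro i hi
    unfold partialProd
    have hq : S.take i = T.take i := by
      rw [hSdef]
      exact List.take_append_of_le_length (by omega)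
    rw [hq]
  classical
  set FA := (Finset.range (L + 2)).image (fun i => a * partialProd (k + 3) S i) with hFA
  set FB := Finset.univ.filter
      (fun b : Equiv.Perm (Fin (k + 3)) => b (Fin.last (k + 2)) = a (Fin.last (k + 2))) with hFB
  have hAcard : FA.card = L + 2 := by
    rw [hFA, Finset.card_image_of_injOn, Finset.card_range]
    intro i hi j hj hij
    simp only [Finset.coe_range, Set.mem_Iio] at hi hj
    exact hD i hi j hj (mul_left_cancel hij)
  have hAB : FA ⊆ FB := by
    intro b hb
    obtain ⟨i, hi, rfl⟩ := Finset.mem_image.mp hb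
    rw [hFB, Finset.mem_filter]
    exact ⟨Finset.mem_univ _, by rw [Equiv.Perm.mul_apply, hfixP]⟩
  have hBcard : FB.card = L + 2 := by
    rw [hLfact]
    have e : {b : Equiv.Perm (Fin (k + 3)) // b (Fin.last (k + 2)) = a (Fin.last (k + 2))}
        ≃ {g : Equiv.Perm (Fin (k + 3)) // g (Fin.last (k + 2)) = Fin.last (k + 2)} :=
      Equiv.subtypeEquiv (Equiv.mulLeft a⁻¹) (by
        intro b
        simp only [Equiv.coe_mulLeft, Equiv.Perm.mul_apply]
        constructor
        · intro h
          rw [h]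
          simp
        · intro h
          have h2 := congrArg a h
          simpa using h2)
    calc FB.card = Fintype.card {b : Equiv.Perm (Fin (k + 3)) //
          b (Fin.last (k + 2)) = a (Fin.last (k + 2))} := (Fintype.card_subtype _).symm
      _ = Fintype.card {g : Equiv.Perm (Fin (k + 3)) //
          g (Fin.last (k + 2)) = Fin.last (k + 2)} := Fintype.card_congr e
      _ = Nat.factorial (k + 2) := card_stab (k + 2)
  have hFAB : FA = FB := Finset.eq_of_subset_of_card_le hAB (by rw [hAcard, hBcard])
  have hBmem : ∀ b, b ∈ FB ↔ lastVal b = lastVal a := by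
    intro b
    rw [hFB, Finset.mem_filter, hlv b, hlv a]
    constructor
    · rintro ⟨-, h⟩
      rw [h]
    · intro h
      exact ⟨Finset.mem_univ _, Fin.val_injective h⟩
  constructor
  · ext b
    simp only [nodesSet, Set.mem_setOf_eq]
    constructor
    · rintro ⟨i, hi, rfl⟩
      have hi' : i ≤ L + 1 := by simpa [hL] using hi
      rw [htake1 i hi', hlv, hlv, Equiv.Perm.mul_apply, hfixP]
    · intro hb
      have hbA : b ∈ FA := by rw [hFAB]; exact (hBmem b).mpr hb
      obtain ⟨i, hi, rfl⟩ := Finset.mem_image.mp hbA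
      rw [Finset.mem_range] at hi
      refine ⟨i, by simp [hL]; omega, ?_⟩
      rw [htake1 i (by omega)]
  · ext b
    simp only [nodesSet, Set.mem_setOf_eq, Set.mem_diff, Set.mem_singleton_iff]
    constructor
    · rintro ⟨i, hi, rfl⟩
      rw [htake0 i hi]
      constructor
      · rw [hlv, hlv, Equiv.Perm.mul_apply, hfixP]
      · intro h
        rw [← hσinv] at h
        have := hD i (by omega) (L + 1) (by omega) (mul_left_cancel h)
        omega
    · rintro ⟨hb, hne⟩
      have hbA : b ∈ FA := by rw [hFAB]; exact (hBmem b).mpr hb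
      obtain ⟨i, hi, rfl⟩ := Finset.mem_image.mp hbA
      rw [Finset.mem_range] at hi
      have hiL : i ≤ L := by
        by_contra hcon
        have hiL1 : i = L + 1 := by omega
        apply hne
        rw [hiL1, hσinv]
      exact ⟨i, hiL, by rw [htake0 i hiL]⟩
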